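/- Let r ≥ 3, h ≤ k ≤ h + ⌊r/2⌋ - 1, and 0 < 1/n ≪ δ ≪ 1/k. Let H be an r-vertex multigraph with h edges (counted with multiplicity) and w_H(e) ≥ 1 for each pair e, and let G be an n-vertex simply k-colored multigraph containing no multicolored copy of H, with minimum degree δ(G) ≥ (1-δ)(h-1)(n-1). Then every pair of vertices of G has multiplicity w_G(e) ≤ h-1. -/

import Mathlib

/-- The multiplicity of the pair `e` in the simply `k`-colored multigraph with colors `c`. -/
noncomputable def colorMult {V : Type*} (k : ℕ) (c : Fin k → SimpleGraph V) (e : Sym2 V) : ℕ :=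
  Nat.card {i : Fin k // e ∈ (c i).edgeSet}

/-- The simply `k`-colored multigraph with colors `c` contains a multicolored copy of the
multigraph on `U` with multiplicity function `wH`. -/
def HasMulticoloredCopy {U V : Type*} (k : ℕ) (c : Fin k → SimpleGraph V)
    (wH : Sym2 U → ℕ) : Prop :=
  ∃ φ : U → V, Function.Injective φ ∧
    ∃ C : Sym2 U → Finset (Fin k),
      (∀ e, (C e).card = wH e) ∧
      (∀ e e', e ≠ e' → Disjoint (C e) (C e')) ∧
      (∀ e, ∀ j ∈ C e, Sym2.map φ e ∈ (c j).edgeSet)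

open Finset
open scoped Classical



/-- Greedy construction of disjoint subsets with prescribed sizes from palettes,
given a "max-type Hall condition". -/
lemma mergedGreedy {α : Type*} [DecidableEq α] {k : ℕ} (pal : α → Finset (Fin k)) (a : α → ℕ) :
    ∀ (N : ℕ) (T : Finset α), T.card = N →
    (∀ T' ⊆ T, T'.Nonempty → ∃ e ∈ T', ∑ x ∈ T', a x ≤ (pal e).card) →
    ∃ C : α → Finset (Fin k),
      (∀ e ∈ T, C e ⊆ pal e ∧ (C e).card = a e) ∧ (∀ e ∉ T, C e = ∅) ∧
      (∀ e f, e ≠ f → Disjoint (C e) (C f)) := by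
  intro N
  induction N with
  | zero =>
    intro T hT _
    refine ⟨fun _ => ∅, ?_, fun _ _ => rfl, fun _ _ _ => disjoint_empty_left _⟩
    intro e he
    rw [Finset.card_eq_zero] at hT
    simp [hT] at he
  | succ N ih =>
    intro T hT hHall
    have hTne : T.Nonempty := Finset.card_pos.mp (by omega)
    obtain ⟨e₀, he₀T, he₀⟩ := hHall T (Finset.Subset.refl T) hTne
    set T' := T.erase e₀ with hT'
    have hT'card : T'.card = N := by
      rw [hT', Finset.card_erase_of_mem he₀T, hT]; omega
    have hT'sub : T' ⊆ T := Finset.erase_subset _ _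
    obtain ⟨C', hC'mem, hC'out, hC'disj⟩ := ih T' hT'card
      (fun S hS hSne => hHall S (hS.trans hT'sub) hSne)
    -- available colors
    set U := T'.biUnion C' with hU
    have hUcard : U.card ≤ ∑ x ∈ T', a x := by
      calc U.card ≤ ∑ x ∈ T', (C' x).card := Finset.card_biUnion_le
        _ ≤ ∑ x ∈ T', a x := Finset.sum_le_sum (fun x hx => le_of_eq (hC'mem x hx).2)
    have havail : a e₀ ≤ ((pal e₀) \ U).card := by
      have h1 : a e₀ + ∑ x ∈ T', a x = ∑ x ∈ T, a x := Finset.add_sum_erase T a he₀T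
      have h2 : (pal e₀).card - U.card ≤ ((pal e₀) \ U).card := Finset.le_card_sdiff _ _
      omega
    obtain ⟨D, hDsub, hDcard⟩ := Finset.exists_subset_card_eq havail
    refine ⟨Function.update C' e₀ D, ?_, ?_, ?_⟩
    · intro e heT
      by_cases he : e = e₀
      · subst he
        rw [Function.update_self]
        exact ⟨hDsub.trans (Finset.sdiff_subset), hDcard⟩
      · rw [Function.update_of_ne he]
        exact hC'mem e (Finset.mem_erase.mpr ⟨he, heT⟩)
    · intro e heT
      have he : e ≠ e₀ := fun h => heT (h ▸ he₀T)
      rw [Function.update_of_ne he]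
      exact hC'out e (fun h => heT (hT'sub h))
    · have hDdisj : ∀ f, f ≠ e₀ → Disjoint D (C' f) := by
        intro f hf
        by_cases hfT : f ∈ T'
        · have : C' f ⊆ U := Finset.subset_biUnion_of_mem C' hfT
          exact Finset.disjoint_left.mpr (fun x hxD hxC =>
            (Finset.mem_sdiff.mp (hDsub hxD)).2 (this hxC))
        · rw [hC'out f hfT]; exact disjoint_empty_right _
      intro e f hef
      by_cases he : e = e₀
      · subst he
        rw [Function.update_self, Function.update_of_ne (Ne.symm hef)]
        exact hDdisj f (Ne.symm hef)
      · rw [Function.update_of_ne he]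
        by_cases hf : f = e₀
        · subst hf
          rw [Function.update_self]
          exact (hDdisj e he).symm
        · rw [Function.update_of_ne hf]
          exact hC'disj e f hef

noncomputable def slo {α : Type*} [LinearOrder α] : Sym2 α → α := Sym2.lift ⟨min, min_comm⟩
noncomputable def shi {α : Type*} [LinearOrder α] : Sym2 α → α := Sym2.lift ⟨max, max_comm⟩

lemma slo_mk {α : Type*} [LinearOrder α] (a b : α) : slo s(a, b) = min a b := by
  simp [slo]

lemma shi_mk {α : Type*} [LinearOrder α] (a b : α) : shi s(a, b) = max a b := by
  simp [shi]

lemma slo_shi_pair {α : Type*} [LinearOrder α] (e : Sym2 α) (he : ¬ e.IsDiag) :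
    slo e < shi e ∧ s(slo e, shi e) = e := by
  induction e using Sym2.inductionOn with
  | hf x y =>
    rw [Sym2.mk_isDiag_iff] at he
    rw [slo_mk, shi_mk]
    rcases le_total x y with h | h
    · rw [min_eq_left h, max_eq_right h]
      exact ⟨lt_of_le_of_ne h he, rfl⟩
    · rw [min_eq_right h, max_eq_left h]
      exact ⟨lt_of_le_of_ne h (Ne.symm he), Sym2.eq_swap⟩

lemma bridge {r : ℕ} (g : Sym2 (Fin r) → ℕ) (W : ℕ → ℕ → ℕ)
    (hg : ∀ i j : Fin r, g s(i, j) = W i.val j.val)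
    (p : ℕ → Prop) [DecidablePred p] :
    (((univ : Finset (Sym2 (Fin r))).filter (fun e => ¬ e.IsDiag)).filter
        (fun e => p (g e))).card
      = ∑ b ∈ range r, ((range b).filter (fun a => p (W a b))).card := by
  classical
  set s := ((univ : Finset (Sym2 (Fin r))).filter (fun e => ¬ e.IsDiag)).filter
      (fun e => p (g e)) with hs
  have hmaps : ∀ e ∈ s, (shi e).val ∈ range r := by
    intro e _; exact mem_range.mpr (shi e).isLt
  rw [Finset.card_eq_sum_card_fiberwise hmaps]
  refine Finset.sum_congr rfl ?_
  intro b hb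
  have hbr : b < r := mem_range.mp hb
  refine Finset.card_bij' (fun e _ => (slo e).val)
    (fun a ha => s(⟨a, lt_trans (mem_range.mp (Finset.mem_filter.mp ha).1) hbr⟩, ⟨b, hbr⟩))
    ?_ ?_ ?_ ?_
  · intro e he
    obtain ⟨hes, heb⟩ := Finset.mem_filter.mp he
    obtain ⟨hend, hep⟩ := Finset.mem_filter.mp hes
    have hnd : ¬ e.IsDiag := (Finset.mem_filter.mp hend).2
    obtain ⟨hlt, hpair⟩ := slo_shi_pair e hnd
    refine Finset.mem_filter.mpr ⟨mem_range.mpr ?_, ?_⟩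
    · show (slo e).val < b
      rw [← heb]; exact hlt
    · have : g e = W (slo e).val (shi e).val := by rw [← hpair, hg]; rw [hpair]
      rw [heb] at this
      rwa [← this]
  · intro a ha
    obtain ⟨har, hpa⟩ := Finset.mem_filter.mp ha
    have halt : a < b := mem_range.mp har
    have hne : (⟨a, lt_trans halt hbr⟩ : Fin r) ≠ ⟨b, hbr⟩ := by
      intro hcon
      have : a = b := congrArg Fin.val hcon
      omega
    refine Finset.mem_filter.mpr ⟨Finset.mem_filter.mpr ⟨Finset.mem_filter.mpr
      ⟨Finset.mem_univ _, by rw [Sym2.mk_isDiag_iff]; exact hne⟩, by rw [hg]; exact hpa⟩, ?_⟩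
    · rw [shi_mk]
      have : (⟨a, lt_trans halt hbr⟩ : Fin r) ≤ ⟨b, hbr⟩ := le_of_lt halt
      rw [max_eq_right this]
  · intro e he
    obtain ⟨hes, heb⟩ := Finset.mem_filter.mp he
    obtain ⟨hend, _⟩ := Finset.mem_filter.mp hes
    have hnd : ¬ e.IsDiag := (Finset.mem_filter.mp hend).2
    obtain ⟨hlt, hpair⟩ := slo_shi_pair e hnd
    have h2 : (⟨b, hbr⟩ : Fin r) = shi e := by
      apply Fin.ext; simp [heb]
    beta_reduce
    rw [h2]
    exact hpair
  · intro a ha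
    obtain ⟨har, _⟩ := Finset.mem_filter.mp ha
    have halt : a < b := mem_range.mp har
    have : (⟨a, lt_trans halt hbr⟩ : Fin r) ≤ ⟨b, hbr⟩ := le_of_lt halt
    simp only [slo_mk]
    rw [min_eq_left this]

/-- Per-prefix deficiency bound. -/
lemma perPrefix (h t d b : ℕ) (g : ℕ → ℕ) (hh : 1 ≤ h) (hd : 1 ≤ d)
    (hk : ∀ a, a < b → g a ≤ h - 1 + t)
    (hsum : b * (h - 1) ≤ ∑ a ∈ range b, g a) :
    d * ((range b).filter (fun a => g a + d < h)).card
      ≤ t * ((range b).filter (fun a => h ≤ g a)).card := by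
  have hpt : ∀ a ∈ range b,
      (d : ℤ) * (if g a + d < h then 1 else 0) - t * (if h ≤ g a then 1 else 0)
        ≤ (h : ℤ) - 1 - g a := by
    intro a ha
    have hab : a < b := mem_range.mp ha
    have hka := hk a hab
    by_cases h1 : g a + d < h
    · have h2 : ¬ h ≤ g a := by omega
      rw [if_pos h1, if_neg h2]
      have : (g a : ℤ) + d ≤ (h : ℤ) - 1 := by exact_mod_cast (by omega : g a + d ≤ h - 1)
      linarith
    · rw [if_neg h1]
      by_cases h2 : h ≤ g a
      · rw [if_pos h2]
        have : (g a : ℤ) ≤ (h : ℤ) - 1 + t := by exact_mod_cast (by omega : g a ≤ h - 1 + t)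
        linarith
      · rw [if_neg h2]
        have : (g a : ℤ) ≤ (h : ℤ) - 1 := by exact_mod_cast (by omega : g a ≤ h - 1)
        linarith
  have hs := Finset.sum_le_sum hpt
  rw [Finset.sum_sub_distrib, ← Finset.mul_sum, ← Finset.mul_sum, Finset.sum_boole,
    Finset.sum_boole] at hs
  have hR : ∑ a ∈ range b, ((h : ℤ) - 1 - g a)
      = b * ((h : ℤ) - 1) - ∑ a ∈ range b, (g a : ℤ) := by
    rw [Finset.sum_sub_distrib, Finset.sum_const, Finset.card_range]
    push_cast
    ring
  rw [hR] at hs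
  have hsum' : (b : ℤ) * ((h : ℤ) - 1) ≤ ∑ a ∈ range b, (g a : ℤ) := by
    have : ((b * (h-1) : ℕ) : ℤ) ≤ ((∑ a ∈ range b, g a : ℕ) : ℤ) := by exact_mod_cast hsum
    push_cast at this
    have hcast : ((h - 1 : ℕ) : ℤ) = (h : ℤ) - 1 := by
      have : 1 ≤ h := hh
      omega
    rw [hcast] at this
    linarith
  have key : (d : ℤ) * ((range b).filter (fun a => g a + d < h)).card
      ≤ (t : ℤ) * ((range b).filter (fun a => h ≤ g a)).card := by linarith
  exact_mod_cast key

/-- The contradiction lemma: no subset of pairs can be too deficient. -/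
lemma contraLemma (r t m d Nd qtot : ℕ) (nb qb : ℕ → ℕ)
    (hq : qtot = ∑ b ∈ range r, qb b)
    (hNd : Nd = ∑ b ∈ range r, nb b)
    (hpp : ∀ b, b < r → d * nb b ≤ t * qb b)
    (hq1 : 1 ≤ qb 1)
    (hcap : ∀ b, b < r → 1 ≤ nb b → qb b + nb b ≤ b)
    (ht : 1 ≤ t) (htr : t * (r - 1) ≤ m) (hr : 3 ≤ r)
    (hd : qtot ≤ d) (hN1 : 1 ≤ Nd) (hNm : m ≤ Nd + d) : False := by
  have h1r : (1 : ℕ) ∈ range r := mem_range.mpr (by omega)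
  have hqtot1 : 1 ≤ qtot := by
    rw [hq, ← Finset.add_sum_erase _ _ h1r]
    omega
  have hdN : d * Nd + t * qb 1 ≤ t * qtot := by
    have e1 : d * Nd = ∑ b ∈ range r, d * nb b := by rw [hNd, Finset.mul_sum]
    have e2 : t * qtot = ∑ b ∈ range r, t * qb b := by rw [hq, Finset.mul_sum]
    rw [e1, e2, ← Finset.add_sum_erase _ (fun b => t * qb b) h1r,
      ← Finset.add_sum_erase _ (fun b => d * nb b) h1r]
    have hnb1 : nb 1 = 0 := by
      by_contra hc
      have := hcap 1 (by omega) (by omega)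
      omega
    rw [hnb1]
    have : ∑ b ∈ (range r).erase 1, d * nb b ≤ ∑ b ∈ (range r).erase 1, t * qb b := by
      apply Finset.sum_le_sum
      intro b hb
      exact hpp b (mem_range.mp (Finset.mem_of_mem_erase hb))
    omega
  by_cases hcase : d + t ≤ m
  · have hNt : t ≤ Nd := by omega
    have e1 : t * d ≤ d * Nd := by
      calc t * d ≤ Nd * d := Nat.mul_le_mul_right _ hNt
        _ = d * Nd := Nat.mul_comm _ _
    have e3 : t * qtot ≤ t * d := Nat.mul_le_mul_left _ hd
    have e4 : t * qb 1 ≥ t * 1 := Nat.mul_le_mul_left _ hq1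
    omega
  · obtain ⟨b, hbr, hnb⟩ : ∃ b, b < r ∧ 1 ≤ nb b := by
      by_contra hc
      push_neg at hc
      have : Nd = 0 := by
        rw [hNd]
        apply Finset.sum_eq_zero
        intro b hb
        have := hc b (mem_range.mp hb)
        omega
      omega
    have e1 : d ≤ d * nb b := Nat.le_mul_of_pos_right _ (by omega)
    have e2 : d * nb b ≤ t * qb b := hpp b hbr
    have e3 : qb b ≤ r - 2 := by
      have := hcap b hbr hnb
      omega
    have e4 : t * qb b ≤ t * (r - 2) := Nat.mul_le_mul_left _ e3
    have e5 : t * (r - 2) + t = t * (r - 1) := by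
      have : r - 1 = (r - 2) + 1 := by omega
      rw [this, Nat.mul_add, Nat.mul_one]
    omega


lemma colorMult_eq_card {V : Type*} (k : ℕ) (c : Fin k → SimpleGraph V) (e : Sym2 V) :
    colorMult k c e
      = ((univ : Finset (Fin k)).filter (fun i => e ∈ (c i).edgeSet)).card := by
  rw [colorMult, Nat.card_eq_fintype_card]
  exact Fintype.card_subtype _

lemma colorMult_le {V : Type*} (k : ℕ) (c : Fin k → SimpleGraph V) (e : Sym2 V) :
    colorMult k c e ≤ k := by
  rw [colorMult_eq_card]
  calc ((univ : Finset (Fin k)).filter _).card ≤ (univ : Finset (Fin k)).card :=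
        Finset.card_le_card (Finset.filter_subset _ _)
    _ = k := by simp

lemma colorMult_diag {V : Type*} (k : ℕ) (c : Fin k → SimpleGraph V) (v : V) :
    colorMult k c s(v, v) = 0 := by
  rw [colorMult]
  have : IsEmpty {i : Fin k // s(v, v) ∈ (c i).edgeSet} := by
    constructor
    rintro ⟨i, hi⟩
    rw [SimpleGraph.mem_edgeSet] at hi
    exact (c i).irrefl hi
  exact Nat.card_of_isEmpty

set_option maxHeartbeats 1000000 in
lemma selection (r h k : ℕ) (δ : ℝ) (n : ℕ) (c : Fin k → SimpleGraph (Fin n))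
    (hr : 3 ≤ r) (hh : 3 ≤ h) (hhk : h ≤ k)
    (hδ0 : 0 < δ) (hδ : δ * (2 * r * h) ≤ 1)
    (hn : 2 * r + 2 * r ^ 2 * h + 2 * r ^ 2 * k + r + 1 ≤ n)
    (hdeg : ∀ v : Fin n, (1 - δ) * ((h : ℝ) - 1) * ((n : ℝ) - 1) ≤
      ((∑ u : Fin n, colorMult k c s(v, u) : ℕ) : ℝ))
    (x y : Fin n) (hxy : x ≠ y) :
    ∃ u : ℕ → Fin n, u 0 = x ∧ u 1 = y ∧
      (∀ a b, a < r → b < r → a ≠ b → u a ≠ u b) ∧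
      (∀ b, 2 ≤ b → b < r →
        b * (h - 1) ≤ ∑ a ∈ range b, colorMult k c s(u a, u b)) := by
  have base : ∃ u : ℕ → Fin n, u 0 = x ∧ u 1 = y ∧
      (∀ a b, a < 2 → b < 2 → a ≠ b → u a ≠ u b) ∧
      (∀ b, 2 ≤ b → b < 2 →
        b * (h - 1) ≤ ∑ a ∈ range b, colorMult k c s(u a, u b)) := by
    refine ⟨fun i => if i = 0 then x else y, by simp, by simp, ?_, by omega⟩
    intro a b ha hb hab
    interval_cases a <;> interval_cases b <;> simp_all <;> exact fun hc => hxy hc.symm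
  have step : ∀ j, 2 ≤ j → j < r →
      (∃ u : ℕ → Fin n, u 0 = x ∧ u 1 = y ∧
        (∀ a b, a < j → b < j → a ≠ b → u a ≠ u b) ∧
        (∀ b, 2 ≤ b → b < j →
          b * (h - 1) ≤ ∑ a ∈ range b, colorMult k c s(u a, u b))) →
      (∃ u : ℕ → Fin n, u 0 = x ∧ u 1 = y ∧
        (∀ a b, a < j + 1 → b < j + 1 → a ≠ b → u a ≠ u b) ∧
        (∀ b, 2 ≤ b → b < j + 1 →
          b * (h - 1) ≤ ∑ a ∈ range b, colorMult k c s(u a, u b))) := by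
    intro j hj2 hjr ⟨u, hu0, hu1, huinj, hubnd⟩
    have hjn : j < n := by nlinarith
    set img := (range j).image u with himg
    have himgcard : img.card = j := by
      rw [himg, Finset.card_image_of_injOn, Finset.card_range]
      intro a ha b hb hab
      by_contra hne
      exact huinj a b (mem_range.mp (by exact_mod_cast ha))
        (mem_range.mp (by exact_mod_cast hb)) hne hab
    set A := (univ : Finset (Fin n)) \ img with hA
    have hAcard : A.card = n - j := by
      rw [hA, Finset.card_sdiff_of_subset (Finset.subset_univ _), himgcard, Finset.card_univ,
        Fintype.card_fin]
    have hAne : A.Nonempty := by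
      rw [← Finset.card_pos, hAcard]
      omega
    set f : Fin n → ℕ := fun z => ∑ a ∈ range j, colorMult k c s(u a, z) with hf
    obtain ⟨z, hzA, hzmax⟩ := Finset.exists_max_image A f hAne
    -- averaging lower bound for the sum of f over A
    have havg : (j : ℝ) * ((j : ℝ) * (k : ℝ)) + (↑(∑ z' ∈ A, f z') : ℝ) ≥
        (j : ℝ) * ((1 - δ) * ((h : ℝ) - 1) * ((n : ℝ) - 1)) := by
      have hper : ∀ a ∈ range j,
          (1 - δ) * ((h : ℝ) - 1) * ((n : ℝ) - 1) ≤
            (j : ℝ) * (k : ℝ) + ∑ z' ∈ A, (colorMult k c s(u a, z') : ℝ) := by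
        intro a _
        have hsplit : ∑ z' ∈ A, colorMult k c s(u a, z')
            + ∑ z' ∈ img, colorMult k c s(u a, z')
            = ∑ z' ∈ univ, colorMult k c s(u a, z') :=
          Finset.sum_sdiff (Finset.subset_univ _)
        have himgle : ∑ z' ∈ img, colorMult k c s(u a, z') ≤ j * k := by
          calc ∑ z' ∈ img, colorMult k c s(u a, z')
              ≤ img.card • k := Finset.sum_le_card_nsmul _ _ _
                (fun z' _ => colorMult_le k c _)
            _ = j * k := by rw [himgcard, smul_eq_mul]
        have hd := hdeg (u a)
        have hc1 : (∑ z' ∈ A, (colorMult k c s(u a, z') : ℝ))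
            + (∑ z' ∈ img, (colorMult k c s(u a, z') : ℝ))
            = ((∑ z' ∈ univ, colorMult k c s(u a, z') : ℕ) : ℝ) := by
          push_cast
          exact_mod_cast congrArg (Nat.cast : ℕ → ℝ) hsplit
        have hc2 : (∑ z' ∈ img, (colorMult k c s(u a, z') : ℝ)) ≤ (j : ℝ) * (k : ℝ) := by
          push_cast
          exact_mod_cast himgle
        linarith
      have hs := Finset.sum_le_sum hper
      simp only [Finset.sum_add_distrib, Finset.sum_const, Finset.card_range,
        nsmul_eq_mul] at hs
      have hsum2 : ∑ a ∈ range j, ∑ z' ∈ A, (colorMult k c s(u a, z') : ℝ)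
          = (↑(∑ z' ∈ A, f z') : ℝ) := by
        rw [Finset.sum_comm, hf]
        push_cast
        rfl
      rw [hsum2] at hs
      linarith
    -- the max element is big
    have hmax : j * (h - 1) ≤ f z := by
      by_contra hcon
      push_neg at hcon
      have hfz : f z ≤ j * (h - 1) - 1 := by omega
      have hsumle : ∑ z' ∈ A, f z' ≤ (n - j) * (j * (h - 1) - 1) := by
        calc ∑ z' ∈ A, f z' ≤ A.card • (j * (h - 1) - 1) :=
              Finset.sum_le_card_nsmul _ _ _ (fun z' hz' => le_trans (hzmax z' hz') hfz)
          _ = (n - j) * (j * (h - 1) - 1) := by rw [hAcard, smul_eq_mul]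
      have hcR : (↑((n - j) * (j * (h - 1) - 1)) : ℝ)
          = ((n : ℝ) - j) * ((j : ℝ) * ((h : ℝ) - 1) - 1) := by
        have h1 : j ≤ n := le_of_lt hjn
        have h2 : 1 ≤ j * (h - 1) := by
          have : 1 ≤ h - 1 := by omega
          nlinarith
        have h3 : 1 ≤ h := by omega
        push_cast [Nat.cast_sub h1, Nat.cast_sub h2, Nat.cast_sub h3]
        ring
      have hch : (↑(∑ z' ∈ A, f z') : ℝ)
          ≤ ((n : ℝ) - j) * ((j : ℝ) * ((h : ℝ) - 1) - 1) := by
        rw [← hcR]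
        exact_mod_cast hsumle
      have hJ2 : (2 : ℝ) ≤ (j : ℝ) := by exact_mod_cast hj2
      have hJR : (j : ℝ) ≤ (r : ℝ) - 1 := by
        have : (j : ℝ) + 1 ≤ (r : ℝ) := by exact_mod_cast hjr
        linarith
      have hH3 : (3 : ℝ) ≤ (h : ℝ) := by exact_mod_cast hh
      have hR3 : (3 : ℝ) ≤ (r : ℝ) := by exact_mod_cast hr
      have hKH : (h : ℝ) ≤ (k : ℝ) := by exact_mod_cast hhk
      have hNbig : 2 * (r : ℝ) + 2 * (r : ℝ) ^ 2 * (h : ℝ) + 2 * (r : ℝ) ^ 2 * (k : ℝ)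
          + (r : ℝ) + 1 ≤ (n : ℝ) := by exact_mod_cast hn
      have hmain : (j : ℝ) * ((1 - δ) * ((h : ℝ) - 1) * ((n : ℝ) - 1))
          - (j : ℝ) * ((j : ℝ) * (k : ℝ))
          ≤ ((n : ℝ) - j) * ((j : ℝ) * ((h : ℝ) - 1) - 1) := by linarith
      have hJR2 : (j : ℝ) ≤ (r : ℝ) := by linarith
      have e1 : (0 : ℝ) ≤ (n : ℝ) - 1 := by
        have : (j : ℝ) < (n : ℝ) := by exact_mod_cast hjn
        linarith
      have f1 : (j : ℝ) * ((h : ℝ) - 1) ≤ (r : ℝ) * (h : ℝ) :=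
        mul_le_mul hJR2 (by linarith) (by linarith) (by linarith)
      have f2 : (j : ℝ) * (j : ℝ) ≤ (r : ℝ) * (r : ℝ) :=
        mul_le_mul hJR2 hJR2 (by linarith) (by linarith)
      have f3 : (j : ℝ) * (j : ℝ) * (k : ℝ) ≤ (r : ℝ) * (r : ℝ) * (k : ℝ) :=
        mul_le_mul_of_nonneg_right f2 (by linarith)
      have f4 : (0 : ℝ) ≤ (j : ℝ) * (j : ℝ) * ((h : ℝ) - 1) :=
        mul_nonneg (mul_nonneg (by linarith) (by linarith)) (by linarith)
      have e2 : δ * ((j : ℝ) * ((h : ℝ) - 1)) ≤ 1 / 2 := by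
        have h2 : δ * ((j : ℝ) * ((h : ℝ) - 1)) ≤ δ * ((r : ℝ) * (h : ℝ)) :=
          mul_le_mul_of_nonneg_left f1 (le_of_lt hδ0)
        linarith
      have e3 : δ * ((j : ℝ) * ((h : ℝ) - 1)) * ((n : ℝ) - 1) ≤ ((n : ℝ) - 1) / 2 := by
        have := mul_le_mul_of_nonneg_right e2 e1
        linarith
      have key2 : (n : ℝ) + 1 ≤ 2 * ((j : ℝ) + (j : ℝ) * ((h : ℝ) - 1)
          + (j : ℝ) * (j : ℝ) * (k : ℝ)) := by nlinarith [hmain, e3, f4]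
      have f5 : (r : ℝ) * (h : ℝ) ≤ (r : ℝ) ^ 2 * (h : ℝ) := by nlinarith
      nlinarith [key2, f1, f3, f5, hJR2]
    -- construct the extended function
    refine ⟨Function.update u j z, ?_, ?_, ?_, ?_⟩
    · rw [Function.update_of_ne (by omega : (0:ℕ) ≠ j)]; exact hu0
    · rw [Function.update_of_ne (by omega : (1:ℕ) ≠ j)]; exact hu1
    · intro a b ha hb hab
      have hz_img : z ∉ img := (Finset.mem_sdiff.mp hzA).2
      by_cases haj : a = j
      · subst haj
        rw [Function.update_self, Function.update_of_ne (by omega : b ≠ a)]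
        intro hcon
        exact hz_img (by
          rw [himg]
          exact Finset.mem_image.mpr ⟨b, mem_range.mpr (by omega), hcon.symm⟩)
      · rw [Function.update_of_ne haj]
        by_cases hbj : b = j
        · subst hbj
          rw [Function.update_self]
          intro hcon
          exact hz_img (by
            rw [himg]
            exact Finset.mem_image.mpr ⟨a, mem_range.mpr (by omega), hcon⟩)
        · rw [Function.update_of_ne hbj]
          exact huinj a b (by omega) (by omega) hab
    · intro b hb2 hbj1
      by_cases hbj : b = j
      · subst hbj
        rw [Function.update_self]
        have heq : ∑ a ∈ range b, colorMult k c s(Function.update u b z a, z)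
            = ∑ a ∈ range b, colorMult k c s(u a, z) := by
          apply Finset.sum_congr rfl
          intro a ha
          rw [Function.update_of_ne (by have := mem_range.mp ha; omega : a ≠ b)]
        rw [heq]
        exact hmax
      · have hbj' : b < j := by omega
        rw [Function.update_of_ne hbj]
        have heq : ∑ a ∈ range b, colorMult k c s(Function.update u j z a, u b)
            = ∑ a ∈ range b, colorMult k c s(u a, u b) := by
          apply Finset.sum_congr rfl
          intro a ha
          rw [Function.update_of_ne (by have := mem_range.mp ha; omega : a ≠ j)]
        rw [heq]
        exact hubnd b hb2 hbj'
  have key : ∀ j, 2 ≤ j → j ≤ r →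
      (∃ u : ℕ → Fin n, u 0 = x ∧ u 1 = y ∧
        (∀ a b, a < j → b < j → a ≠ b → u a ≠ u b) ∧
        (∀ b, 2 ≤ b → b < j →
          b * (h - 1) ≤ ∑ a ∈ range b, colorMult k c s(u a, u b))) := by
    intro j
    induction j with
    | zero => omega
    | succ j ih =>
      intro h2 hjr
      by_cases hj2 : j + 1 = 2
      · rw [hj2]; exact base
      · exact step j (by omega) (by omega) (ih (by omega) (by omega))
  exact key r (by omega) le_rfl

set_option maxHeartbeats 2000000 in
/-- Lemma B.1 (le:ksmall_r_vertex-degree). -/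
theorem stmt_13 (r h k : ℕ) (hr : 3 ≤ r) (hk1 : h ≤ k) (hk2 : k ≤ h + r / 2 - 1)
    (wH : Sym2 (Fin r) → ℕ)
    (hloop : ∀ v : Fin r, wH s(v, v) = 0)
    (hge1 : ∀ e : Sym2 (Fin r), ¬ e.IsDiag → 1 ≤ wH e)
    (hsum : ∑ e ∈ (Finset.univ : Finset (Sym2 (Fin r))).filter (fun e => ¬ e.IsDiag), wH e = h) :
    ∃ δ₀ : ℝ, 0 < δ₀ ∧ ∀ δ : ℝ, 0 < δ → δ ≤ δ₀ →
      ∃ n₀ : ℕ, ∀ n : ℕ, n₀ ≤ n →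
        ∀ c : Fin k → SimpleGraph (Fin n),
          ¬ HasMulticoloredCopy k c wH →
          (∀ v : Fin n,
            (1 - δ) * ((h : ℝ) - 1) * ((n : ℝ) - 1) ≤
              ((∑ u : Fin n, colorMult k c s(v, u) : ℕ) : ℝ)) →
          ∀ e : Sym2 (Fin n), colorMult k c e ≤ h - 1 := by
  -- basic numerology
  set S : Finset (Sym2 (Fin r)) :=
    (Finset.univ : Finset (Sym2 (Fin r))).filter (fun e => ¬ e.IsDiag) with hS
  set m : ℕ := S.card with hm
  have hwH0 : ∀ e : Sym2 (Fin r), e.IsDiag → wH e = 0 := by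
    intro e
    induction e using Sym2.inductionOn with
    | hf a b =>
      intro hd
      rw [Sym2.mk_isDiag_iff] at hd
      subst hd
      exact hloop a
  have hmsum : m = ∑ b ∈ range r, b := by
    have hb := bridge (r := r) (fun _ => 0) (fun _ _ => 0) (fun _ _ => rfl) (fun _ => True)
    simpa using hb
  have hm2 : 2 * m = r * (r - 1) := by
    rw [hmsum, Nat.mul_comm]
    exact Finset.sum_range_id_mul_two r
  set t : ℕ := k + 1 - h with ht
  have ht1 : 1 ≤ t := by omega
  have h2t : 2 * t ≤ r := by omega
  have hmh : m ≤ h := by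
    rw [← hsum]
    calc m = ∑ _e ∈ S, 1 := by rw [hm, Finset.card_eq_sum_ones]
      _ ≤ ∑ e ∈ S, wH e := Finset.sum_le_sum (fun e he => hge1 e (mem_filter.mp he).2)
  have hm3 : 3 ≤ m := by
    have h6 : 6 ≤ r * (r - 1) := by
      calc (6:ℕ) = 3 * 2 := rfl
        _ ≤ r * (r - 1) := Nat.mul_le_mul hr (by omega)
    omega
  have hh3 : 3 ≤ h := le_trans hm3 hmh
  have htrm : t * (r - 1) ≤ m := by
    have hc : 2 * (t * (r - 1)) ≤ 2 * m := by
      calc 2 * (t * (r - 1)) = (2 * t) * (r - 1) := by ring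
        _ ≤ r * (r - 1) := Nat.mul_le_mul_right _ h2t
        _ = 2 * m := hm2.symm
    omega
  have hkt : k = h - 1 + t := by omega
  have hrpos : (0:ℝ) < (r:ℝ) := by exact_mod_cast (by omega : 0 < r)
  have hhpos : (0:ℝ) < (h:ℝ) := by exact_mod_cast (by omega : 0 < h)
  refine ⟨1 / (2 * (r:ℝ) * (h:ℝ)), by positivity, ?_⟩
  intro δ hδ0 hδle
  refine ⟨2 * r + 2 * r ^ 2 * h + 2 * r ^ 2 * k + r + 1, ?_⟩
  intro n hn c hno hdeg
  by_contra hcon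
  push_neg at hcon
  obtain ⟨e0, he0⟩ := hcon
  obtain ⟨x, y, hxy_eq⟩ : ∃ x y, e0 = s(x, y) := by
    induction e0 using Sym2.inductionOn with
    | hf a b => exact ⟨a, b, rfl⟩
  rw [hxy_eq] at he0
  have hheavy : h ≤ colorMult k c s(x, y) := by omega
  have hxy : x ≠ y := by
    rintro rfl
    rw [colorMult_diag] at hheavy
    omega
  have hδ1 : δ * (2 * (r:ℝ) * (h:ℝ)) ≤ 1 := by
    have hpos : (0:ℝ) < 2 * (r:ℝ) * (h:ℝ)  := by positivity
    calc δ * (2 * (r:ℝ) * (h:ℝ)) ≤ (1 / (2 * (r:ℝ) * (h:ℝ))) * (2 * (r:ℝ) * (h:ℝ)) :=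
          mul_le_mul_of_nonneg_right hδle (le_of_lt hpos)
      _ = 1 := by field_simp
  obtain ⟨u, hu0, hu1, huinj, hubnd⟩ :=
    selection r h k δ n c hr hh3 hk1 hδ0 hδ1 hn hdeg x y hxy
  set v : Fin r → Fin n := fun i => u i.val with hv
  have hvinj : Function.Injective v := by
    intro i j hij
    by_contra hne
    exact huinj i.val j.val i.isLt j.isLt (fun hval => hne (Fin.ext hval)) hij
  set W : ℕ → ℕ → ℕ := fun a b => colorMult k c s(u a, u b) with hW
  set WS : Sym2 (Fin r) → ℕ := fun e => colorMult k c (Sym2.map v e) with hWS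
  have hgW : ∀ i j : Fin r, WS s(i, j) = W i.val j.val := by
    intro i j
    rw [hWS]
    simp only [Sym2.map_pair_eq]
    try rfl
  have hW01 : h ≤ W 0 1 := by
    rw [hW]
    simp only [hu0, hu1]
    exact hheavy
  have hWk : ∀ a b : ℕ, W a b ≤ h - 1 + t := by
    intro a b
    rw [← hkt]
    exact colorMult_le k c _
  -- prefix counting quantities
  set qb : ℕ → ℕ := fun b => ((range b).filter (fun a => h ≤ W a b)).card with hqb
  set qtot : ℕ := ∑ b ∈ range r, qb b with hqtot
  have hq1 : 1 ≤ qb 1 := by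
    rw [hqb]
    have : (0:ℕ) ∈ (range 1).filter (fun a => h ≤ W a 1) :=
      mem_filter.mpr ⟨mem_range.mpr one_pos, hW01⟩
    exact Finset.card_pos.mpr ⟨0, this⟩
  have hpp : ∀ d, 1 ≤ d → ∀ b, b < r →
      d * ((range b).filter (fun a => W a b + d < h)).card ≤ t * qb b := by
    intro d hd b hbr
    by_cases hb2 : 2 ≤ b
    · exact perPrefix h t d b (fun a => W a b) (by omega) hd (fun a _ => hWk a b)
        (hubnd b hb2 hbr)
    · interval_cases b
      · simp
      · have : ((range 1).filter (fun a => W a 1 + d < h)).card = 0 := by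
          rw [Finset.card_eq_zero, Finset.filter_eq_empty_iff]
          intro a ha
          have : a = 0 := by have := mem_range.mp ha; omega
          subst this
          omega
        rw [this]
        omega
  have hcap : ∀ d b, b < r → 1 ≤ ((range b).filter (fun a => W a b + d < h)).card →
      qb b + ((range b).filter (fun a => W a b + d < h)).card ≤ b := by
    intro d b _ _
    have hdisj : Disjoint ((range b).filter (fun a => h ≤ W a b))
        ((range b).filter (fun a => W a b + d < h)) := by
      rw [Finset.disjoint_left]
      intro a ha hb
      have h1 := (mem_filter.mp ha).2
      have h2 := (mem_filter.mp hb).2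
      omega
    calc qb b + ((range b).filter (fun a => W a b + d < h)).card
        = (((range b).filter (fun a => h ≤ W a b)) ∪
            ((range b).filter (fun a => W a b + d < h))).card :=
          (Finset.card_union_of_disjoint hdisj).symm
      _ ≤ (range b).card := Finset.card_le_card
          (Finset.union_subset (Finset.filter_subset _ _) (Finset.filter_subset _ _))
      _ = b := Finset.card_range b
  -- the Hall-type maximum condition
  have hallmax : ∀ T ⊆ S, T.Nonempty → ∃ e ∈ T, ∑ e' ∈ T, wH e' ≤ WS e := by
    intro T hTS hTne
    obtain ⟨estar, hestar, hmaxT⟩ := Finset.exists_max_image T WS hTne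
    by_cases hheavyT : h ≤ WS estar
    · refine ⟨estar, hestar, le_trans ?_ hheavyT⟩
      rw [← hsum]
      exact Finset.sum_le_sum_of_subset hTS
    · by_contra hcon2
      push_neg at hcon2
      have hWstar : WS estar < ∑ e' ∈ T, wH e' := hcon2 estar hestar
      push_neg at hheavyT
      have hsplitS : ∑ e ∈ S \ T, wH e + ∑ e ∈ T, wH e = h := by
        rw [← hsum]
        exact Finset.sum_sdiff hTS
      have hcardlow : (S \ T).card ≤ ∑ e ∈ S \ T, wH e := by
        rw [Finset.card_eq_sum_ones]
        exact Finset.sum_le_sum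
          (fun e he => hge1 e (mem_filter.mp (Finset.mem_sdiff.mp he).1).2)
      have hTcard : T.card ≤ m := Finset.card_le_card hTS
      have hsdcard : (S \ T).card = m - T.card := by rw [Finset.card_sdiff_of_subset hTS, hm]
      have hTne1 : 1 ≤ T.card := Finset.card_pos.mpr hTne
      set d0 : ℕ := h - 1 - WS estar with hd0
      have hkey1 : m ≤ T.card + d0 := by omega
      have hTsub : T ⊆ S.filter (fun e => WS e + d0 < h) := by
        intro e he
        refine mem_filter.mpr ⟨hTS he, ?_⟩
        have := hmaxT e he
        omega
      have hbr1 : (S.filter (fun e => WS e + d0 < h)).card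
          = ∑ b ∈ range r, ((range b).filter (fun a => W a b + d0 < h)).card := by
        rw [hS]
        exact bridge WS W hgW (fun x => x + d0 < h)
      have hbr2 : (S.filter (fun e => h ≤ WS e)).card = qtot := by
        rw [hS, hqtot]
        exact bridge WS W hgW (fun x => h ≤ x)
      have hTled : T.card ≤ ∑ b ∈ range r, ((range b).filter
          (fun a => W a b + d0 < h)).card := by
        rw [← hbr1]
        exact Finset.card_le_card hTsub
      by_cases hq : qtot ≤ d0
      · have hd01 : 1 ≤ d0 := by
          have : 1 ≤ qtot := by
            rw [hqtot]
            calc 1 ≤ qb 1 := hq1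
              _ ≤ ∑ b ∈ range r, qb b := Finset.single_le_sum (fun _ _ => Nat.zero_le _)
                  (mem_range.mpr (by omega))
          omega
        exact contraLemma r t m d0
          (∑ b ∈ range r, ((range b).filter (fun a => W a b + d0 < h)).card) qtot
          (fun b => ((range b).filter (fun a => W a b + d0 < h)).card) qb
          hqtot rfl (fun b hbr => hpp d0 hd01 b hbr) hq1
          (fun b hbr hnb => hcap d0 b hbr hnb) ht1 htrm hr hq (by omega) (by omega)
      · push_neg at hq
        have hheavysub : S.filter (fun e => h ≤ WS e) ⊆ S \ T := by
          intro e he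
          obtain ⟨heS, heh⟩ := mem_filter.mp he
          refine Finset.mem_sdiff.mpr ⟨heS, ?_⟩
          intro heT
          have := hmaxT e heT
          omega
        have hqle : qtot ≤ m - T.card := by
          rw [← hbr2, ← hsdcard]
          exact Finset.card_le_card hheavysub
        omega
  -- apply the greedy construction
  set pal : Sym2 (Fin r) → Finset (Fin k) :=
    fun e => (univ : Finset (Fin k)).filter (fun i => Sym2.map v e ∈ (c i).edgeSet) with hpal
  have hpalcard : ∀ e, (pal e).card = WS e := by
    intro e
    rw [hpal, hWS]
    exact (colorMult_eq_card k c (Sym2.map v e)).symm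
  obtain ⟨C, hC1, hC2, hC3⟩ := mergedGreedy pal wH S.card S rfl (by
    intro T' hT' hT'ne
    obtain ⟨e, heT, hle⟩ := hallmax T' hT' hT'ne
    exact ⟨e, heT, by rw [hpalcard]; exact hle⟩)
  -- assemble the multicolored copy
  apply hno
  refine ⟨v, hvinj, C, ?_, hC3, ?_⟩
  · intro e
    by_cases heS : e ∈ S
    · exact (hC1 e heS).2
    · rw [hC2 e heS]
      have : e.IsDiag := by
        by_contra hnd
        exact heS (mem_filter.mpr ⟨mem_univ _, hnd⟩)
      rw [Finset.card_empty, hwH0 e this]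
  · intro e j hj
    by_cases heS : e ∈ S
    · have := (hC1 e heS).1 hj
      rw [hpal] at this
      exact (mem_filter.mp this).2
    · rw [hC2 e heS] at hj
      simp at hj
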